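/- arXiv:1303.4785 — 2 statements merged into one kernel-verified Lean document; each statement's English description precedes it below -/
import Mathlib

section
/- Einstein addition obeys the left gyroassociative law: for all u, v, w in the c-ball V_c, u ⊕ (v ⊕ w) = (u ⊕ v) ⊕ gyr[u,v]w. -/
open scoped RealInnerProductSpace

noncomputable def gamma {V : Type*} [NormedAddCommGroup V] [InnerProductSpace ℝ V]
    (c : ℝ) (u : V) : ℝ :=
  1 / Real.sqrt (1 - ‖u‖ ^ 2 / c ^ 2)

noncomputable def eAdd {V : Type*} [NormedAddCommGroup V] [InnerProductSpace ℝ V]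
    (c : ℝ) (u v : V) : V :=
  (1 / (1 + ⟪u, v⟫ / c ^ 2)) •
    (u + (1 / gamma c u) • v +
      ((1 / c ^ 2) * (gamma c u / (1 + gamma c u)) * ⟪u, v⟫) • u)

noncomputable def eGyr {V : Type*} [NormedAddCommGroup V] [InnerProductSpace ℝ V]
    (c : ℝ) (u v w : V) : V :=
  eAdd c (-(eAdd c u v)) (eAdd c u (eAdd c v w))

noncomputable def eCoadd {V : Type*} [NormedAddCommGroup V] [InnerProductSpace ℝ V]
    (c : ℝ) (u v : V) : V :=
  eAdd c u (eGyr c u (-v) v)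

noncomputable def mAdd {V : Type*} [NormedAddCommGroup V] [InnerProductSpace ℝ V]
    (s : ℝ) (u v : V) : V :=
  (1 / (1 + (2 / s ^ 2) * ⟪u, v⟫ + (1 / s ^ 4) * ‖u‖ ^ 2 * ‖v‖ ^ 2)) •
    ((1 + (2 / s ^ 2) * ⟪u, v⟫ + (1 / s ^ 2) * ‖v‖ ^ 2) • u +
      (1 - (1 / s ^ 2) * ‖u‖ ^ 2) • v)

noncomputable def mGyr {V : Type*} [NormedAddCommGroup V] [InnerProductSpace ℝ V]
    (s : ℝ) (u v w : V) : V :=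
  mAdd s (-(mAdd s u v)) (mAdd s u (mAdd s v w))

noncomputable def mCoadd {V : Type*} [NormedAddCommGroup V] [InnerProductSpace ℝ V]
    (s : ℝ) (u v : V) : V :=
  mAdd s u (mGyr s u (-v) v)

noncomputable def artanh (x : ℝ) : ℝ :=
  (1 / 2) * Real.log ((1 + x) / (1 - x))

open Classical in
noncomputable def sMul {V : Type*} [NormedAddCommGroup V] [InnerProductSpace ℝ V]
    (c : ℝ) (r : ℝ) (v : V) : V :=
  if v = 0 then 0 else (c * Real.tanh (r * artanh (‖v‖ / c)) / ‖v‖) • v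

variable {V : Type*} [NormedAddCommGroup V] [InnerProductSpace ℝ V]

/-- Scalar coefficient of `a` in `(-a) ⊕ b`. -/
noncomputable def eA (c g P : ℝ) : ℝ :=
  (1 / (1 - P / c ^ 2)) * (-1 + (1 / c ^ 2) * (g / (1 + g)) * P)

/-- Scalar coefficient of `b` in `(-a) ⊕ b`. -/
noncomputable def eB (c g P : ℝ) : ℝ :=
  (1 / (1 - P / c ^ 2)) * (1 / g)

lemma eD_eq (c g P : ℝ) (hc : c ≠ 0) (hg : g ≠ 0) (hg1 : 1 + g ≠ 0)
    (hPc : c ^ 2 - P ≠ 0) :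
    1 / (1 + (eA c g P * (c ^ 2 - c ^ 2 / g ^ 2) + eB c g P * P) / c ^ 2)
      = g ^ 2 * (c ^ 2 - P) / c ^ 2 := by
  rw [eA, eB]
  rw [show 1 + ((1 / (1 - P / c ^ 2)) * (-1 + (1 / c ^ 2) * (g / (1 + g)) * P)
        * (c ^ 2 - c ^ 2 / g ^ 2) + (1 / (1 - P / c ^ 2)) * (1 / g) * P) / c ^ 2
      = c ^ 2 / (g ^ 2 * (c ^ 2 - P)) by field_simp; ring]
  rw [one_div_div]

lemma coeff_a_eq (c g P : ℝ) (hc : c ≠ 0) (hg : g ≠ 0) (hg1 : 1 + g ≠ 0)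
    (hPc : c ^ 2 - P ≠ 0) :
    (g ^ 2 * (c ^ 2 - P) / c ^ 2) *
      (1 + (1 / g) * eA c g P +
        (1 / c ^ 2) * (g / (1 + g)) * (eA c g P * (c ^ 2 - c ^ 2 / g ^ 2) + eB c g P * P))
      = 0 := by
  rw [eA, eB]
  field_simp
  ring

lemma coeff_b_eq (c g P : ℝ) (hc : c ≠ 0) (hg : g ≠ 0) (hg1 : 1 + g ≠ 0)
    (hPc : c ^ 2 - P ≠ 0) :
    (g ^ 2 * (c ^ 2 - P) / c ^ 2) * ((1 / g) * eB c g P) = 1 := by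
  rw [eB]
  field_simp

lemma gamma_pos (c : ℝ) (hc : 0 < c) (u : V) (hu : ‖u‖ < c) : 0 < gamma c u := by
  have h : 0 < 1 - ‖u‖ ^ 2 / c ^ 2 := by
    have h1 : ‖u‖ ^ 2 < c ^ 2 := by nlinarith [norm_nonneg u]
    have : ‖u‖ ^ 2 / c ^ 2 < 1 := (div_lt_one (by positivity)).2 h1
    linarith
  unfold gamma
  positivity

lemma gamma_neg (c : ℝ) (u : V) : gamma c (-u) = gamma c u := by simp [gamma]

lemma norm_sq_eq (c : ℝ) (hc : 0 < c) (u : V) (hu : ‖u‖ < c) :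
    ‖u‖ ^ 2 = c ^ 2 - c ^ 2 / (gamma c u) ^ 2 := by
  have h : 0 < 1 - ‖u‖ ^ 2 / c ^ 2 := by
    have h1 : ‖u‖ ^ 2 < c ^ 2 := by nlinarith [norm_nonneg u]
    have : ‖u‖ ^ 2 / c ^ 2 < 1 := (div_lt_one (by positivity)).2 h1
    linarith
  have hg : (gamma c u) ^ 2 = 1 / (1 - ‖u‖ ^ 2 / c ^ 2) := by
    unfold gamma
    rw [div_pow, one_pow, Real.sq_sqrt h.le]
  rw [hg]
  field_simp
  ring

lemma inner_lt (c : ℝ) (hc : 0 < c) (u v : V) (hu : ‖u‖ < c) (hv : ‖v‖ < c) :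
    |⟪u, v⟫| < c ^ 2 := by
  have h := abs_real_inner_le_norm u v
  nlinarith [norm_nonneg u, norm_nonneg v]

lemma eAdd_eq_smul (c : ℝ) (u v : V) :
    eAdd c u v = (1 / (1 + ⟪u, v⟫ / c ^ 2)) •
      ((1 + (1 / c ^ 2) * (gamma c u / (1 + gamma c u)) * ⟪u, v⟫) • u
        + (1 / gamma c u) • v) := by
  simp only [eAdd]
  module

lemma norm_eAdd_sq (c : ℝ) (hc : 0 < c) (u v : V) (hu : ‖u‖ < c) (hv : ‖v‖ < c) :
    ‖eAdd c u v‖ ^ 2 =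
      c ^ 2 - c ^ 2 * (c ^ 2 - ‖u‖ ^ 2) * (c ^ 2 - ‖v‖ ^ 2) / (c ^ 2 + ⟪u, v⟫) ^ 2 := by
  have hγ : 0 < gamma c u := gamma_pos c hc u hu
  have hγ1 : gamma c u ≠ 0 := hγ.ne'
  have hγ2 : 1 + gamma c u ≠ 0 := by positivity
  have hc2 : (c : ℝ) ≠ 0 := hc.ne'
  have hP : |⟪u, v⟫| < c ^ 2 := inner_lt c hc u v hu hv
  have hPc : c ^ 2 + ⟪u, v⟫ ≠ 0 := by cases abs_lt.1 hP with | intro h1 h2 => linarith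
  have hden : 1 + ⟪u, v⟫ / c ^ 2 ≠ 0 := by
    have h : 1 + ⟪u, v⟫ / c ^ 2 = (c ^ 2 + ⟪u, v⟫) / c ^ 2 := by field_simp
    rw [h]
    exact div_ne_zero hPc (by positivity)
  have hX : ‖u‖ ^ 2 = c ^ 2 - c ^ 2 / (gamma c u) ^ 2 := norm_sq_eq c hc u hu
  have hsq : ‖eAdd c u v‖ ^ 2 =
      (1 / (1 + ⟪u, v⟫ / c ^ 2)) ^ 2 *
        ((1 + (1 / c ^ 2) * (gamma c u / (1 + gamma c u)) * ⟪u, v⟫) ^ 2 * ‖u‖ ^ 2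
          + 2 * ((1 + (1 / c ^ 2) * (gamma c u / (1 + gamma c u)) * ⟪u, v⟫)
              * (1 / gamma c u) * ⟪u, v⟫)
          + (1 / gamma c u) ^ 2 * ‖v‖ ^ 2) := by
    rw [eAdd_eq_smul, norm_smul, mul_pow, norm_add_sq_real, norm_smul, norm_smul,
      real_inner_smul_left, real_inner_smul_right]
    simp only [Real.norm_eq_abs, mul_pow, sq_abs]
    ring
  rw [hsq, hX]
  field_simp
  ring

lemma norm_eAdd_lt (c : ℝ) (hc : 0 < c) (u v : V) (hu : ‖u‖ < c) (hv : ‖v‖ < c) :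
    ‖eAdd c u v‖ < c := by
  have h := norm_eAdd_sq c hc u v hu hv
  have hP : |⟪u, v⟫| < c ^ 2 := inner_lt c hc u v hu hv
  have hPc : c ^ 2 + ⟪u, v⟫ ≠ 0 := by cases abs_lt.1 hP with | intro h1 h2 => linarith
  have hpos : 0 < c ^ 2 * (c ^ 2 - ‖u‖ ^ 2) * (c ^ 2 - ‖v‖ ^ 2) / (c ^ 2 + ⟪u, v⟫) ^ 2 := by
    have h1 : 0 < c ^ 2 - ‖u‖ ^ 2 := by nlinarith [norm_nonneg u]
    have h2 : 0 < c ^ 2 - ‖v‖ ^ 2 := by nlinarith [norm_nonneg v]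
    have h3 : 0 < (c ^ 2 + ⟪u, v⟫) ^ 2 := by positivity
    positivity
  have hlt : ‖eAdd c u v‖ ^ 2 < c ^ 2 := by rw [h]; linarith
  nlinarith [norm_nonneg (eAdd c u v)]

lemma eAdd_cancel (c : ℝ) (hc : 0 < c) (a b : V) (ha : ‖a‖ < c) (hb : ‖b‖ < c) :
    eAdd c a (eAdd c (-a) b) = b := by
  have hγ : 0 < gamma c a := gamma_pos c hc a ha
  have hγ1 : gamma c a ≠ 0 := hγ.ne'
  have hγ2 : 1 + gamma c a ≠ 0 := by positivity
  have hc2 : (c : ℝ) ≠ 0 := hc.ne'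
  have hP : |⟪a, b⟫| < c ^ 2 := inner_lt c hc a b ha hb
  have hPc : c ^ 2 - ⟪a, b⟫ ≠ 0 := by cases abs_lt.1 hP with | intro h1 h2 => linarith
  have hX : ‖a‖ ^ 2 = c ^ 2 - c ^ 2 / (gamma c a) ^ 2 := norm_sq_eq c hc a ha
  have hx : eAdd c (-a) b
      = eA c (gamma c a) ⟪a, b⟫ • a + eB c (gamma c a) ⟪a, b⟫ • b := by
    rw [eAdd_eq_smul, inner_neg_left, gamma_neg, eA, eB]
    module
  rw [hx, eAdd]
  rw [show (⟪a, eA c (gamma c a) ⟪a, b⟫ • a + eB c (gamma c a) ⟪a, b⟫ • b⟫ : ℝ)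
      = eA c (gamma c a) ⟪a, b⟫ * (c ^ 2 - c ^ 2 / (gamma c a) ^ 2)
        + eB c (gamma c a) ⟪a, b⟫ * ⟪a, b⟫ by
    rw [inner_add_right, real_inner_smul_right, real_inner_smul_right,
      real_inner_self_eq_norm_sq, hX]]
  rw [eD_eq c (gamma c a) ⟪a, b⟫ hc2 hγ1 hγ2 hPc]
  have hca := coeff_a_eq c (gamma c a) ⟪a, b⟫ hc2 hγ1 hγ2 hPc
  have hcb := coeff_b_eq c (gamma c a) ⟪a, b⟫ hc2 hγ1 hγ2 hPc
  match_scalars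
  · linear_combination hca
  · linear_combination hcb

theorem einstein_left_gyroassociative (c : ℝ) (hc : 0 < c) (u v w : V)
    (hu : ‖u‖ < c) (hv : ‖v‖ < c) (hw : ‖w‖ < c) :
    eAdd c u (eAdd c v w) = eAdd c (eAdd c u v) (eGyr c u v w) := by
  have h1 : ‖eAdd c u v‖ < c := norm_eAdd_lt c hc u v hu hv
  have h2 : ‖eAdd c v w‖ < c := norm_eAdd_lt c hc v w hv hw
  have h3 : ‖eAdd c u (eAdd c v w)‖ < c := norm_eAdd_lt c hc u _ hu h2
  rw [eGyr]
  exact (eAdd_cancel c hc (eAdd c u v) (eAdd c u (eAdd c v w)) h1 h3).symm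
end

section
/- (Möbius double-gyroline theorem) Let A, B be any two distinct points of the s-ball V_s and let L(t) = A ⊕_M ((⊖_M A ⊕_M B) ⊙ t), t ∈ ℝ, be the Möbius gyroline through A and B. Then for all t ∈ ℝ, 2 ⊙ L(t) = A ⊞_M L(2t). -/
open scoped RealInnerProductSpace

lemma tanh_eq_exp (x : ℝ) :
    Real.tanh x = (Real.exp (2*x) - 1) / (Real.exp (2*x) + 1) := by
  rw [Real.tanh_eq_sinh_div_cosh, Real.sinh_eq, Real.cosh_eq]
  have h1 : Real.exp x > 0 := Real.exp_pos x
  have h2 : Real.exp (2*x) = Real.exp x * Real.exp x := by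
    rw [two_mul, Real.exp_add]
  have h3 : Real.exp x + Real.exp (-x) > 0 := by positivity
  have h4 : Real.exp (2*x) + 1 > 0 := by positivity
  have h5 : Real.exp (-x) = (Real.exp x)⁻¹ := Real.exp_neg x
  rw [h2, h5]
  field_simp

lemma abs_tanh_lt_one (x : ℝ) : |Real.tanh x| < 1 := by
  rw [tanh_eq_exp, abs_lt]
  have h : Real.exp (2*x) > 0 := Real.exp_pos _
  constructor
  · rw [lt_div_iff₀ (by linarith)]; linarith
  · rw [div_lt_iff₀ (by linarith)]; linarith

lemma tanh_two_mul (x : ℝ) :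
    Real.tanh (2*x) = 2 * Real.tanh x / (1 + Real.tanh x ^ 2) := by
  have hE : Real.exp (2*x) > 0 := Real.exp_pos _
  have h4 : Real.exp (2*(2*x)) = Real.exp (2*x) * Real.exp (2*x) := by
    rw [← Real.exp_add]; ring_nf
  rw [tanh_eq_exp, tanh_eq_exp, h4]
  have h1 : Real.exp (2*x) + 1 ≠ 0 := by positivity
  have h2 : Real.exp (2*x) * Real.exp (2*x) + 1 ≠ 0 := by positivity
  have h3 : 1 + ((Real.exp (2*x) - 1)/(Real.exp (2*x)+1))^2 ≠ 0 := by positivity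
  field_simp
  ring

lemma tanh_artanh {k : ℝ} (h1 : -1 < k) (h2 : k < 1) : Real.tanh (artanh k) = k := by
  have hy : (1 + k) / (1 - k) > 0 := by
    apply div_pos <;> linarith
  have he : Real.exp (2 * artanh k) = (1+k)/(1-k) := by
    rw [artanh]
    rw [show 2 * ((1:ℝ)/2 * Real.log ((1+k)/(1-k))) = Real.log ((1+k)/(1-k)) by ring]
    exact Real.exp_log hy
  rw [tanh_eq_exp, he]
  rw [div_add_one (by linarith), div_sub_one (by linarith)]
  rw [div_div_div_cancel_right₀]
  · rw [show (1+k) - (1-k) = 2*k by ring, show (1+k)+(1-k) = 2 by ring]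
    ring
  · linarith

variable {V : Type*} [NormedAddCommGroup V] [InnerProductSpace ℝ V]


lemma mAdd_zero_right (s : ℝ) (u : V) : mAdd s u 0 = u := by
  simp [mAdd]

lemma mAdd_neg_self (s : ℝ) (v : V) : mAdd s (-v) v = 0 := by
  rw [mAdd, inner_neg_left, real_inner_self_eq_norm_sq, norm_neg]
  match_scalars
  ring

lemma mAdd_one (u v : V) : mAdd 1 u v =
    (1 / (1 + 2 * ⟪u, v⟫ + ‖u‖ ^ 2 * ‖v‖ ^ 2)) •
    ((1 + 2 * ⟪u, v⟫ + ‖v‖ ^ 2) • u + (1 - ‖u‖ ^ 2) • v) := by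
  simp [mAdd]

lemma denom_pos1 {u v : V} (hu : ‖u‖ < 1) (hv : ‖v‖ < 1) :
    0 < 1 + 2 * ⟪u, v⟫ + ‖u‖ ^ 2 * ‖v‖ ^ 2 := by
  have h1 : |⟪u, v⟫| ≤ ‖u‖ * ‖v‖ := abs_real_inner_le_norm u v
  have h3 : -(‖u‖*‖v‖) ≤ ⟪u,v⟫ := neg_le_of_abs_le h1
  have h2 : ‖u‖ * ‖v‖ < 1 := by nlinarith [norm_nonneg u, norm_nonneg v]
  nlinarith [sq_nonneg (1 - ‖u‖*‖v‖)]

lemma denom_neg_pos1 {u v : V} (hu : ‖u‖ < 1) (hv : ‖v‖ < 1) :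
    0 < 1 - 2 * ⟪u, v⟫ + ‖u‖ ^ 2 * ‖v‖ ^ 2 := by
  have h := denom_pos1 hu (v := -v) (by rwa [norm_neg])
  rw [inner_neg_right, norm_neg] at h
  linarith

lemma norm_sq_mAdd1 {u v : V} (hu : ‖u‖ < 1) (hv : ‖v‖ < 1) :
    1 - ‖mAdd 1 u v‖^2 =
      (1 - ‖u‖^2) * (1 - ‖v‖^2) / (1 + 2 * ⟪u, v⟫ + ‖u‖ ^ 2 * ‖v‖ ^ 2) := by
  have hD : (1 + 2 * ⟪u, v⟫ + ‖u‖ ^ 2 * ‖v‖ ^ 2) ≠ 0 := (denom_pos1 hu hv).ne'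
  rw [mAdd_one, norm_smul, mul_pow, ← real_inner_self_eq_norm_sq (_ + _)]
  simp only [inner_add_left, inner_add_right, real_inner_smul_left, real_inner_smul_right]
  simp only [real_inner_self_eq_norm_sq]
  rw [real_inner_comm u v]
  set D := 1 + 2 * ⟪u, v⟫ + ‖u‖ ^ 2 * ‖v‖ ^ 2 with hDdef
  clear_value D
  rw [Real.norm_eq_abs, sq_abs]
  field_simp
  rw [hDdef]
  ring

lemma norm_mAdd_lt1 {u v : V} (hu : ‖u‖ < 1) (hv : ‖v‖ < 1) : ‖mAdd 1 u v‖ < 1 := by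
  have h := norm_sq_mAdd1 hu hv
  have hD := denom_pos1 hu hv
  have h1 : (0:ℝ) < 1 - ‖u‖^2 := by nlinarith [norm_nonneg u]
  have h2 : (0:ℝ) < 1 - ‖v‖^2 := by nlinarith [norm_nonneg v]
  have h3 : 0 < 1 - ‖mAdd 1 u v‖^2 := by rw [h]; positivity
  nlinarith [norm_nonneg (mAdd 1 u v)]

lemma mAdd_self1 (v : V) : mAdd 1 v v = (2 / (1 + ‖v‖^2)) • v := by
  rw [mAdd_one, real_inner_self_eq_norm_sq]
  have h1 : (1:ℝ) + ‖v‖^2 ≠ 0 := by positivity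
  match_scalars
  field_simp
  ring

lemma mCoadd_one {u v : V} (hu : ‖u‖ < 1) (hv : ‖v‖ < 1) :
    mCoadd 1 u v = (1/(1-‖u‖^2*‖v‖^2)) • ((1-‖v‖^2)•u + (1-‖u‖^2)•v) := by
  have hDm := denom_neg_pos1 hu hv
  have hDm0 : 1 - 2 * ⟪u, v⟫ + ‖u‖ ^ 2 * ‖v‖ ^ 2 ≠ 0 := hDm.ne'
  have hz : mAdd 1 u (-v) = (1 / (1 - 2 * ⟪u, v⟫ + ‖u‖ ^ 2 * ‖v‖ ^ 2)) •
      ((1 - 2 * ⟪u, v⟫ + ‖v‖ ^ 2) • u + (-(1 - ‖u‖ ^ 2)) • v) := by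
    rw [mAdd_one, inner_neg_right, norm_neg]
    match_scalars <;> ring
  have hzu : ⟪mAdd 1 u (-v), u⟫ =
      (‖u‖^2 + ‖u‖^2*‖v‖^2 - ⟪u, v⟫ - ‖u‖^2*⟪u, v⟫) / (1 - 2 * ⟪u, v⟫ + ‖u‖ ^ 2 * ‖v‖ ^ 2) := by
    rw [hz]
    simp only [inner_add_left, real_inner_smul_left, real_inner_self_eq_norm_sq]
    rw [real_inner_comm v u]
    set D := 1 - 2 * ⟪u, v⟫ + ‖u‖ ^ 2 * ‖v‖ ^ 2 with hDdef
    clear_value D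
    field_simp
    ring
  have hzz : ‖mAdd 1 u (-v)‖^2 =
      (‖u‖^2 + ‖v‖^2 - 2*⟪u, v⟫) / (1 - 2 * ⟪u, v⟫ + ‖u‖ ^ 2 * ‖v‖ ^ 2) := by
    rw [← real_inner_self_eq_norm_sq, hz]
    simp only [inner_add_left, inner_add_right, real_inner_smul_left, real_inner_smul_right]
    simp only [real_inner_self_eq_norm_sq]
    rw [real_inner_comm u v]
    set D := 1 - 2 * ⟪u, v⟫ + ‖u‖ ^ 2 * ‖v‖ ^ 2 with hDdef
    clear_value D
    field_simp
    rw [hDdef]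
    ring
  have hden : 1 + 2 * -((‖u‖ ^ 2 + ‖u‖ ^ 2 * ‖v‖ ^ 2 - ⟪u, v⟫ - ‖u‖ ^ 2 * ⟪u, v⟫) /
        (1 - 2 * ⟪u, v⟫ + ‖u‖ ^ 2 * ‖v‖ ^ 2)) +
      (‖u‖ ^ 2 + ‖v‖ ^ 2 - 2 * ⟪u, v⟫) / (1 - 2 * ⟪u, v⟫ + ‖u‖ ^ 2 * ‖v‖ ^ 2) * ‖u‖ ^ 2
      = (1 - ‖u‖ ^ 2)^2 / (1 - 2 * ⟪u, v⟫ + ‖u‖ ^ 2 * ‖v‖ ^ 2) := by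
    field_simp
    ring
  have h1a0 : (1:ℝ) - ‖u‖ ^ 2 ≠ 0 := by nlinarith [norm_nonneg u]
  have hg : mAdd 1 (-(mAdd 1 u (-v))) u = (1 / (1 - 2 * ⟪u, v⟫ + ‖u‖ ^ 2 * ‖v‖ ^ 2)) •
      ((-(2 * ‖v‖ ^ 2 * (1 - ⟪u, v⟫))) • u + (1 - ‖u‖ ^ 2 * ‖v‖ ^ 2) • v) := by
    rw [mAdd_one, inner_neg_left, norm_neg, hzu, hzz, hden, hz]
    match_scalars <;> (field_simp; ring)
  have h1ab0 : (1:ℝ) - ‖u‖ ^ 2 * ‖v‖ ^ 2 ≠ 0 := by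
    nlinarith [norm_nonneg u, norm_nonneg v, sq_nonneg (‖u‖*‖v‖)]
  have hug : ⟪u, (1 / (1 - 2 * ⟪u, v⟫ + ‖u‖ ^ 2 * ‖v‖ ^ 2)) •
      ((-(2 * ‖v‖ ^ 2 * (1 - ⟪u, v⟫))) • u + (1 - ‖u‖ ^ 2 * ‖v‖ ^ 2) • v)⟫ =
      (⟪u, v⟫ + ‖u‖ ^ 2 * ‖v‖ ^ 2 * ⟪u, v⟫ - 2 * ‖u‖ ^ 2 * ‖v‖ ^ 2) /
        (1 - 2 * ⟪u, v⟫ + ‖u‖ ^ 2 * ‖v‖ ^ 2) := by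
    simp only [inner_add_right, real_inner_smul_right, real_inner_self_eq_norm_sq]
    field_simp
    ring
  have hGG : ‖(1 / (1 - 2 * ⟪u, v⟫ + ‖u‖ ^ 2 * ‖v‖ ^ 2)) •
      ((-(2 * ‖v‖ ^ 2 * (1 - ⟪u, v⟫))) • u + (1 - ‖u‖ ^ 2 * ‖v‖ ^ 2) • v)‖ ^ 2 = ‖v‖ ^ 2 := by
    rw [← real_inner_self_eq_norm_sq]
    simp only [inner_add_left, inner_add_right, real_inner_smul_left, real_inner_smul_right]
    simp only [real_inner_self_eq_norm_sq]
    rw [real_inner_comm u v]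
    field_simp
    ring
  rw [mCoadd, mGyr, mAdd_neg_self, mAdd_zero_right, hg]
  rw [mAdd_one, hug, hGG]
  have hden2 : 1 + 2 * ((⟪u, v⟫ + ‖u‖ ^ 2 * ‖v‖ ^ 2 * ⟪u, v⟫ - 2 * ‖u‖ ^ 2 * ‖v‖ ^ 2) /
        (1 - 2 * ⟪u, v⟫ + ‖u‖ ^ 2 * ‖v‖ ^ 2)) + ‖u‖ ^ 2 * ‖v‖ ^ 2 =
      (1 - ‖u‖ ^ 2 * ‖v‖ ^ 2) ^ 2 / (1 - 2 * ⟪u, v⟫ + ‖u‖ ^ 2 * ‖v‖ ^ 2) := by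
    field_simp
    ring
  rw [hden2]
  match_scalars <;> field_simp <;> ring

set_option maxHeartbeats 1000000 in
lemma two_sum1 {u v : V} (hu : ‖u‖ < 1) (hv : ‖v‖ < 1) :
    mAdd 1 (mAdd 1 u v) (mAdd 1 u v) = mCoadd 1 u (mAdd 1 u (mAdd 1 v v)) := by
  have hD0 : 1 + 2 * ⟪u, v⟫ + ‖u‖ ^ 2 * ‖v‖ ^ 2 ≠ 0 := (denom_pos1 hu hv).ne'
  have h1b0 : (1:ℝ) + ‖v‖ ^ 2 ≠ 0 := by positivity
  have h1a0 : (1:ℝ) - ‖u‖ ^ 2 ≠ 0 := by nlinarith [norm_nonneg u]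
  have hF0 : (1 + ‖u‖^2) * (1 + ‖v‖^2) + 4 * ⟪u, v⟫ ≠ 0 := by
    have h1 : |⟪u, v⟫| ≤ ‖u‖ * ‖v‖ := abs_real_inner_le_norm u v
    have h3 : -(‖u‖*‖v‖) ≤ ⟪u,v⟫ := neg_le_of_abs_le h1
    have h2 : ‖u‖ * ‖v‖ < 1 := by nlinarith [norm_nonneg u, norm_nonneg v]
    nlinarith [sq_nonneg (‖u‖ - ‖v‖), sq_nonneg (1 - ‖u‖*‖v‖)]
  -- LHS
  have h1x : 1 + ‖mAdd 1 u v‖^2 =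
      ((1 + ‖u‖^2) * (1 + ‖v‖^2) + 4 * ⟪u, v⟫) / (1 + 2 * ⟪u, v⟫ + ‖u‖ ^ 2 * ‖v‖ ^ 2) := by
    have hx := norm_sq_mAdd1 hu hv
    have h : ‖mAdd 1 u v‖^2 = 1 - (1-‖u‖^2)*(1-‖v‖^2)/(1 + 2 * ⟪u, v⟫ + ‖u‖ ^ 2 * ‖v‖ ^ 2) := by
      linarith
    rw [h]
    field_simp
    ring
  rw [mAdd_self1 (mAdd 1 u v), h1x, mAdd_self1 v]
  rw [mAdd_one u v]
  -- the scaled vector w := (2/(1+b)) • v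
  have habs : |2/(1+‖v‖^2)| = 2/(1+‖v‖^2) := abs_of_nonneg (by positivity)
  have hwlt : ‖(2/(1+‖v‖^2)) • v‖ < 1 := by
    rw [norm_smul, Real.norm_eq_abs, habs, div_mul_eq_mul_div, div_lt_one (by positivity)]
    nlinarith [sq_nonneg (1 - ‖v‖), norm_nonneg v]
  have hwi : ⟪u, (2/(1+‖v‖^2)) • v⟫ = 2/(1+‖v‖^2) * ⟪u, v⟫ := real_inner_smul_right u v _
  have hwn : ‖(2/(1+‖v‖^2)) • v‖^2 = (2/(1+‖v‖^2))^2 * ‖v‖^2 := by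
    rw [norm_smul, Real.norm_eq_abs, habs, mul_pow]
  have hE0 : (1+‖v‖^2)^2 + 4*⟪u,v⟫*(1+‖v‖^2) + 4*‖u‖^2*‖v‖^2 ≠ 0 := by
    have h1 : |⟪u, v⟫| ≤ ‖u‖ * ‖v‖ := abs_real_inner_le_norm u v
    have h3 : -(‖u‖*‖v‖) ≤ ⟪u,v⟫ := neg_le_of_abs_le h1
    have hA : 0 < 1 + ‖v‖^2 - 2*‖u‖*‖v‖ := by
      nlinarith [sq_nonneg (1-‖v‖), mul_nonneg (norm_nonneg u) (sq_nonneg (1-‖v‖)),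
        norm_nonneg u, norm_nonneg v]
    nlinarith [mul_pos hA hA,
      mul_nonneg (show (0:ℝ) ≤ ⟪u,v⟫ + ‖u‖*‖v‖ from by linarith)
        (show (0:ℝ) ≤ 1 + ‖v‖^2 from by positivity)]
  have hyden : 1 + 2 * (2/(1+‖v‖^2) * ⟪u, v⟫) + ‖u‖^2 * ((2/(1+‖v‖^2))^2 * ‖v‖^2) =
      ((1+‖v‖^2)^2 + 4*⟪u,v⟫*(1+‖v‖^2) + 4*‖u‖^2*‖v‖^2)/(1+‖v‖^2)^2 := by
    field_simp
    ring
  have hy : mAdd 1 u ((2/(1+‖v‖^2)) • v) =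
      (1/((1+‖v‖^2)^2 + 4*⟪u,v⟫*(1+‖v‖^2) + 4*‖u‖^2*‖v‖^2)) •
        (((1+‖v‖^2)^2 + 4*⟪u,v⟫*(1+‖v‖^2) + 4*‖v‖^2) • u +
          (2*(1-‖u‖^2)*(1+‖v‖^2)) • v) := by
    rw [mAdd_one, hwi, hwn, hyden]
    match_scalars <;> field_simp <;> ring
  have hylt : ‖mAdd 1 u ((2/(1+‖v‖^2)) • v)‖ < 1 := norm_mAdd_lt1 hu hwlt
  have hy1 : ‖mAdd 1 u ((2/(1+‖v‖^2)) • v)‖^2 =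
      (((1+‖v‖^2)^2 + 4*⟪u,v⟫*(1+‖v‖^2) + 4*‖u‖^2*‖v‖^2) - (1-‖u‖^2)*(1-‖v‖^2)^2)
        / ((1+‖v‖^2)^2 + 4*⟪u,v⟫*(1+‖v‖^2) + 4*‖u‖^2*‖v‖^2) := by
    have h := norm_sq_mAdd1 hu hwlt
    rw [hwi, hwn, hyden] at h
    have h2 : 1 - ‖mAdd 1 u ((2/(1+‖v‖^2)) • v)‖^2 =
        (1-‖u‖^2)*(1-‖v‖^2)^2/((1+‖v‖^2)^2 + 4*⟪u,v⟫*(1+‖v‖^2) + 4*‖u‖^2*‖v‖^2) := by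
      rw [h]
      rw [div_div_eq_mul_div]
      congr 1
      field_simp
      ring
    have h3 : (((1+‖v‖^2)^2 + 4*⟪u,v⟫*(1+‖v‖^2) + 4*‖u‖^2*‖v‖^2) - (1-‖u‖^2)*(1-‖v‖^2)^2)
        / ((1+‖v‖^2)^2 + 4*⟪u,v⟫*(1+‖v‖^2) + 4*‖u‖^2*‖v‖^2) =
        1 - (1-‖u‖^2)*(1-‖v‖^2)^2/((1+‖v‖^2)^2 + 4*⟪u,v⟫*(1+‖v‖^2) + 4*‖u‖^2*‖v‖^2) := by
      rw [sub_div, div_self hE0]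
    rw [h3]
    linarith
  rw [mCoadd_one hu hylt, hy1]
  have hc1 : 1 - ‖u‖^2 * ((((1+‖v‖^2)^2 + 4*⟪u,v⟫*(1+‖v‖^2) + 4*‖u‖^2*‖v‖^2) - (1-‖u‖^2)*(1-‖v‖^2)^2)
        / ((1+‖v‖^2)^2 + 4*⟪u,v⟫*(1+‖v‖^2) + 4*‖u‖^2*‖v‖^2)) =
      (1-‖u‖^2)*(1+‖v‖^2)*((1+‖u‖^2)*(1+‖v‖^2)+4*⟪u,v⟫)
        / ((1+‖v‖^2)^2 + 4*⟪u,v⟫*(1+‖v‖^2) + 4*‖u‖^2*‖v‖^2) := by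
    rw [← mul_div_assoc, one_sub_div hE0]
    congr 1
    ring
  have hc2 : 1 - ((((1+‖v‖^2)^2 + 4*⟪u,v⟫*(1+‖v‖^2) + 4*‖u‖^2*‖v‖^2) - (1-‖u‖^2)*(1-‖v‖^2)^2)
        / ((1+‖v‖^2)^2 + 4*⟪u,v⟫*(1+‖v‖^2) + 4*‖u‖^2*‖v‖^2)) =
      (1-‖u‖^2)*(1-‖v‖^2)^2
        / ((1+‖v‖^2)^2 + 4*⟪u,v⟫*(1+‖v‖^2) + 4*‖u‖^2*‖v‖^2) := by
    rw [sub_div, div_self hE0, sub_sub_cancel]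
  rw [hc1, hc2, hy]
  set E := (1+‖v‖^2)^2 + 4*⟪u,v⟫*(1+‖v‖^2) + 4*‖u‖^2*‖v‖^2 with hE
  set F := (1 + ‖u‖^2) * (1 + ‖v‖^2) + 4 * ⟪u, v⟫ with hF
  set D := 1 + 2 * ⟪u, v⟫ + ‖u‖ ^ 2 * ‖v‖ ^ 2 with hD
  clear_value E F D
  match_scalars <;> (rw [one_div_div, div_div_eq_mul_div]; field_simp <;> subst hE hF hD <;> ring)



lemma sMul_zero_vec (c r : ℝ) : sMul c r (0 : V) = 0 := by simp [sMul]

lemma norm_sMul_lt1 (t : ℝ) (v : V) : ‖sMul 1 t v‖ < 1 := by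
  by_cases h : v = 0
  · simp [h, sMul]
  · have hv0 : ‖v‖ ≠ 0 := norm_ne_zero_iff.mpr h
    rw [sMul, if_neg h, norm_smul, Real.norm_eq_abs, one_mul, abs_div, abs_norm,
      div_mul_cancel₀ _ hv0]
    exact abs_tanh_lt_one _

lemma sMul_two1 {v : V} (hv : ‖v‖ < 1) : sMul 1 2 v = mAdd 1 v v := by
  by_cases h : v = 0
  · simp [h, sMul, mAdd_zero_right]
  · have hv0 : ‖v‖ ≠ 0 := norm_ne_zero_iff.mpr h
    have hvn : (0:ℝ) ≤ ‖v‖ := norm_nonneg v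
    rw [sMul, if_neg h, mAdd_self1, div_one]
    have ht : Real.tanh (2 * artanh ‖v‖) = 2 * ‖v‖ / (1 + ‖v‖^2) := by
      rw [tanh_two_mul, tanh_artanh (by linarith) hv]
    rw [ht]
    match_scalars
    have h1 : (1:ℝ) + ‖v‖^2 ≠ 0 := by positivity
    field_simp

lemma sMul_two_mul1 (t : ℝ) (v : V) :
    sMul 1 (2*t) v = mAdd 1 (sMul 1 t v) (sMul 1 t v) := by
  by_cases h : v = 0
  · simp [h, sMul, mAdd_zero_right]
  · have hv0 : ‖v‖ ≠ 0 := norm_ne_zero_iff.mpr h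
    rw [sMul, if_neg h, sMul, if_neg h, mAdd_self1]
    have hn : ‖(1 * Real.tanh (t * artanh (‖v‖ / 1)) / ‖v‖) • v‖^2 =
        Real.tanh (t * artanh (‖v‖ / 1)) ^ 2 := by
      rw [norm_smul, Real.norm_eq_abs, one_mul, abs_div, abs_norm, div_mul_cancel₀ _ hv0,
        sq_abs]
    rw [hn]
    have ht : Real.tanh (2 * t * artanh (‖v‖ / 1)) =
        2 * Real.tanh (t * artanh (‖v‖ / 1)) / (1 + Real.tanh (t * artanh (‖v‖ / 1)) ^ 2) := by
      rw [show 2 * t * artanh (‖v‖ / 1) = 2 * (t * artanh (‖v‖ / 1)) by ring, tanh_two_mul]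
    rw [ht]
    match_scalars
    have h1 : (1:ℝ) + Real.tanh (t * artanh (‖v‖ / 1)) ^ 2 ≠ 0 := by positivity
    field_simp
    try ring

lemma norm_inv_smul {s : ℝ} (hs : 0 < s) (u : V) : ‖s⁻¹ • u‖ = s⁻¹ * ‖u‖ := by
  rw [norm_smul, Real.norm_eq_abs, abs_inv, abs_of_pos hs]

lemma ball1 {s : ℝ} (hs : 0 < s) {u : V} (hu : ‖u‖ < s) : ‖s⁻¹ • u‖ < 1 := by
  rw [norm_inv_smul hs]
  rw [inv_mul_lt_one₀ hs]  -- may not exist; fallback below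
  exact hu

lemma denom_pos {s : ℝ} (hs : 0 < s) {u v : V} (hu : ‖u‖ < s) (hv : ‖v‖ < s) :
    0 < 1 + (2 / s ^ 2) * ⟪u, v⟫ + (1 / s ^ 4) * ‖u‖ ^ 2 * ‖v‖ ^ 2 := by
  have h1 : |⟪u, v⟫| ≤ ‖u‖ * ‖v‖ := abs_real_inner_le_norm u v
  have h2 : ‖u‖ * ‖v‖ < s * s :=
    mul_lt_mul' (le_of_lt hu) hv (norm_nonneg v) hs
  have h3 : -(‖u‖*‖v‖) ≤ ⟪u,v⟫ := neg_le_of_abs_le h1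
  have key : 0 < s^4 + 2*s^2*⟪u,v⟫ + ‖u‖^2*‖v‖^2 := by
    nlinarith [sq_nonneg (s^2 - ‖u‖*‖v‖), sq_nonneg s, mul_pos hs hs]
  have he : 1 + (2 / s ^ 2) * ⟪u, v⟫ + (1 / s ^ 4) * ‖u‖ ^ 2 * ‖v‖ ^ 2
      = (s^4 + 2*s^2*⟪u,v⟫ + ‖u‖^2*‖v‖^2)/s^4 := by
    field_simp
  rw [he]; positivity

lemma mAdd_scale {s : ℝ} (hs : 0 < s) {u v : V} (hu : ‖u‖ < s) (hv : ‖v‖ < s) :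
    mAdd s u v = s • mAdd 1 (s⁻¹ • u) (s⁻¹ • v) := by
  have hs0 : s ≠ 0 := hs.ne'
  have hD : 1 + (2 / s ^ 2) * ⟪u, v⟫ + (1 / s ^ 4) * ‖u‖ ^ 2 * ‖v‖ ^ 2 ≠ 0 :=
    (denom_pos hs hu hv).ne'
  rw [mAdd_one, mAdd]
  rw [real_inner_smul_left, real_inner_smul_right, norm_inv_smul hs, norm_inv_smul hs]
  have hq : 1 + 2 * (s⁻¹ * (s⁻¹ * ⟪u, v⟫)) + (s⁻¹ * ‖u‖) ^ 2 * (s⁻¹ * ‖v‖) ^ 2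
      = 1 + (2 / s ^ 2) * ⟪u, v⟫ + (1 / s ^ 4) * ‖u‖ ^ 2 * ‖v‖ ^ 2 := by
    field_simp
  rw [hq]
  set D := 1 + (2 / s ^ 2) * ⟪u, v⟫ + (1 / s ^ 4) * ‖u‖ ^ 2 * ‖v‖ ^ 2 with hDdef
  clear_value D
  match_scalars <;> field_simp

lemma norm_mAdd_lt {s : ℝ} (hs : 0 < s) {u v : V} (hu : ‖u‖ < s) (hv : ‖v‖ < s) :
    ‖mAdd s u v‖ < s := by
  rw [mAdd_scale hs hu hv, norm_smul, Real.norm_eq_abs, abs_of_pos hs]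
  have h := norm_mAdd_lt1 (ball1 hs hu) (ball1 hs hv)
  nlinarith [norm_nonneg (mAdd 1 (s⁻¹ • u) (s⁻¹ • v))]

lemma sMul_scale {s : ℝ} (hs : 0 < s) (r : ℝ) (v : V) :
    sMul s r v = s • sMul 1 r (s⁻¹ • v) := by
  have hs0 : s ≠ 0 := hs.ne'
  by_cases h : v = 0
  · simp [h, sMul]
  · have hv0 : ‖v‖ ≠ 0 := norm_ne_zero_iff.mpr h
    have hsv : s⁻¹ • v ≠ 0 := smul_ne_zero (inv_ne_zero hs0) h
    rw [sMul, if_neg h, sMul, if_neg hsv, norm_inv_smul hs, div_one]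
    have : s⁻¹ * ‖v‖ = ‖v‖ / s := by rw [inv_mul_eq_div]
    rw [this]
    match_scalars
    field_simp

lemma mCoadd_scale {s : ℝ} (hs : 0 < s) {u v : V} (hu : ‖u‖ < s) (hv : ‖v‖ < s) :
    mCoadd s u v = s • mCoadd 1 (s⁻¹ • u) (s⁻¹ • v) := by
  have hs0 : s ≠ 0 := hs.ne'
  rw [mCoadd, mGyr, mAdd_neg_self, mAdd_zero_right,
      mCoadd, mGyr, mAdd_neg_self, mAdd_zero_right]
  have hnv : ‖-v‖ < s := by rwa [norm_neg]
  have h1 : mAdd s u (-v) = s • mAdd 1 (s⁻¹ • u) (-(s⁻¹ • v)) := by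
    rw [mAdd_scale hs hu hnv, smul_neg]
  have hz : ‖mAdd s u (-v)‖ < s := norm_mAdd_lt hs hu hnv
  have hnz : ‖-(mAdd s u (-v))‖ < s := by rwa [norm_neg]
  have h2 : mAdd s (-(mAdd s u (-v))) u
      = s • mAdd 1 (-(mAdd 1 (s⁻¹ • u) (-(s⁻¹ • v)))) (s⁻¹ • u) := by
    rw [mAdd_scale hs hnz hu, h1, smul_neg, inv_smul_smul₀ hs0]
  have hg : ‖mAdd s (-(mAdd s u (-v))) u‖ < s := norm_mAdd_lt hs hnz hu
  rw [mAdd_scale hs hu hg, h2, inv_smul_smul₀ hs0]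

theorem mobius_double_gyroline (s : ℝ) (hs : 0 < s) (A B : V)
    (hA : ‖A‖ < s) (hB : ‖B‖ < s) (hAB : A ≠ B) :
    ∀ t : ℝ,
      sMul s 2 (mAdd s A (sMul s t (mAdd s (-A) B))) =
        mCoadd s A (mAdd s A (sMul s (2 * t) (mAdd s (-A) B))) := by
  intro t
  have hs0 : s ≠ 0 := hs.ne'
  have hnA : ‖-A‖ < s := by rwa [norm_neg]
  have hA1 : ‖s⁻¹ • A‖ < 1 := ball1 hs hA
  -- d
  have hd : mAdd s (-A) B = s • mAdd 1 (-(s⁻¹ • A)) (s⁻¹ • B) := by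
    rw [mAdd_scale hs hnA hB, smul_neg]
  set d1 : V := mAdd 1 (-(s⁻¹ • A)) (s⁻¹ • B) with hd1
  -- w = sMul s t d
  have hw : sMul s t (mAdd s (-A) B) = s • sMul 1 t d1 := by
    rw [sMul_scale hs, hd, inv_smul_smul₀ hs0]
  set w1 : V := sMul 1 t d1 with hw1def
  have hw1 : ‖w1‖ < 1 := norm_sMul_lt1 t d1
  have hws : ‖sMul s t (mAdd s (-A) B)‖ < s := by
    rw [hw, norm_smul, Real.norm_eq_abs, abs_of_pos hs]
    nlinarith [norm_nonneg w1]
  -- x = A ⊕ w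
  have hx : mAdd s A (sMul s t (mAdd s (-A) B)) = s • mAdd 1 (s⁻¹ • A) w1 := by
    rw [mAdd_scale hs hA hws, hw, inv_smul_smul₀ hs0]
  set x1 : V := mAdd 1 (s⁻¹ • A) w1 with hx1def
  have hx1 : ‖x1‖ < 1 := norm_mAdd_lt1 hA1 hw1
  have hxs : ‖mAdd s A (sMul s t (mAdd s (-A) B))‖ < s := by
    rw [hx, norm_smul, Real.norm_eq_abs, abs_of_pos hs]
    nlinarith [norm_nonneg x1]
  -- LHS
  have hLHS : sMul s 2 (mAdd s A (sMul s t (mAdd s (-A) B))) = s • sMul 1 2 x1 := by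
    rw [sMul_scale hs, hx, inv_smul_smul₀ hs0]
  -- w2 = sMul s (2t) d
  have hw2 : sMul s (2*t) (mAdd s (-A) B) = s • sMul 1 (2*t) d1 := by
    rw [sMul_scale hs, hd, inv_smul_smul₀ hs0]
  have hw2b : ‖sMul s (2*t) (mAdd s (-A) B)‖ < s := by
    rw [hw2, norm_smul, Real.norm_eq_abs, abs_of_pos hs]
    nlinarith [norm_nonneg (sMul 1 (2*t) d1), norm_sMul_lt1 (2*t) d1]
  -- y
  have hy : mAdd s A (sMul s (2*t) (mAdd s (-A) B)) = s • mAdd 1 (s⁻¹ • A) (sMul 1 (2*t) d1) := by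
    rw [mAdd_scale hs hA hw2b, hw2, inv_smul_smul₀ hs0]
  have hyb : ‖mAdd s A (sMul s (2*t) (mAdd s (-A) B))‖ < s :=
    norm_mAdd_lt hs hA hw2b
  have hRHS : mCoadd s A (mAdd s A (sMul s (2*t) (mAdd s (-A) B)))
      = s • mCoadd 1 (s⁻¹ • A) (mAdd 1 (s⁻¹ • A) (sMul 1 (2*t) d1)) := by
    rw [mCoadd_scale hs hA hyb, hy, inv_smul_smul₀ hs0]
  rw [hLHS, hRHS]
  congr 1
  rw [sMul_two_mul1, ← hw1def, sMul_two1 hx1, hx1def]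
  exact two_sum1 hA1 hw1
end
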